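/- For any pair of non-recursive SHACL documents M₁ and M₂: M₁ is contained in M₂ (i.e., every graph valid with respect to M₁ is valid with respect to M₂) if and only if the MSCL sentence ∃⃗[τ(M₁)] ∧ ∃⃗[τ(M̃₂) ∧ ¬τ(M₂)] is unsatisfiable, where ∃⃗[·] denotes existential quantification of all shape relations of the enclosed formula. -/

import Mathlib

/-!
STATEMENT 7.  Containment of non-recursive SHACL documents reduces to MSCL
unsatisfiability: `M₁ ⊆ M₂` iff `∃⃗[τ(M₁)] ∧ ∃⃗[τ(M̃₂) ∧ ¬τ(M₂)]` is
unsatisfiable.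
-/

namespace SHACL

/-- RDF nodes: a single infinite domain of RDF terms. -/
abbrev Node := ℕ

/-- Shape names. -/
abbrev SName := ℕ

/-- The distinguished `rdf:type` predicate, used for class membership. -/
def isaPred : Node := 0

/-- An RDF graph: a set of (subject, predicate, object) triples. -/
abbrev Graph := Set (Node × Node × Node)

/-- Kleene's three truth values. -/
inductive K3 | t | f | u
deriving DecidableEq

/-- An assignment maps each node and shape name to `some true` (`s ∈ σ(n)`),
`some false` (`¬s ∈ σ(n)`) or `none` (neither). -/
abbrev Assignment := Node → SName → Option Bool

/-- Total assignment (w.r.t. a set of shape names). -/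
def Assignment.TotalOn (σ : Assignment) (S : Set SName) : Prop :=
  ∀ n : Node, ∀ s ∈ S, (σ n s).isSome

/-- SHACL constraints (abstract core syntax). -/
inductive Constraint
  | top
  | ref (s : SName)
  | eqc (c : Node)
  | hasTriple (p o : Node)
  | exPath (p : Node) (d : Constraint)
  | not (d : Constraint)
  | and (d₁ d₂ : Constraint)

open Classical in
/-- Three-valued (Kleene) evaluation of a constraint at a node. -/
noncomputable def eval (G : Graph) (σ : Assignment) : Constraint → Node → K3
  | .top, _ => .t
  | .ref s, n =>
      match σ n s with
      | some true => .t
      | some false => .f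
      | none => .u
  | .eqc c, n => if n = c then .t else .f
  | .hasTriple p o, n => if (n, p, o) ∈ G then .t else .f
  | .exPath p d, n =>
      if ∃ m, (n, p, m) ∈ G ∧ eval G σ d m = .t then .t
      else if ∀ m, (n, p, m) ∈ G → eval G σ d m = .f then .f
      else .u
  | .not d, n =>
      match eval G σ d n with
      | .t => .f
      | .f => .t
      | .u => .u
  | .and d₁ d₂, n =>
      match eval G σ d₁ n, eval G σ d₂ n with
      | .f, _ => .f
      | _, .f => .f
      | .t, .t => .t
      | _, _ => .u

/-- SHACL target declarations: node, class, subjects-of and objects-of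
targets. -/
inductive TargetDecl
  | node (c : Node)
  | cls (c : Node)
  | subjectsOf (p : Node)
  | objectsOf (p : Node)

/-- Semantics of a target declaration: the unary query returning the set of
targeted nodes of a graph. -/
def TargetDecl.sem : TargetDecl → Graph → Set Node
  | .node c, _ => {c}
  | .cls c, G => {n | (n, isaPred, c) ∈ G}
  | .subjectsOf p, G => {n | ∃ o, (n, p, o) ∈ G}
  | .objectsOf p, G => {n | ∃ s, (s, p, n) ∈ G}

/-- A SHACL shape: a name, a target definition (a finite set of target
declarations) and a constraint. -/
structure Shape where
  name : SName
  target : List TargetDecl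
  constraint : Constraint

/-- A SHACL document: a finite set of shapes. -/
abbrev Document := List Shape

/-- Faithfulness of an assignment w.r.t. a graph and a document. -/
def Faithful (G : Graph) (σ : Assignment) (M : Document) : Prop :=
  (∀ sh ∈ M, ∀ n : Node,
      (σ n sh.name = some true ↔ eval G σ sh.constraint n = .t) ∧
      (σ n sh.name = some false ↔ eval G σ sh.constraint n = .f)) ∧
  (∀ sh ∈ M, ∀ td ∈ sh.target, ∀ n ∈ td.sem G, σ n sh.name = some true)

/-!  ### SCL: the Shapes Constraint Logic  -/

/-- SCL sentences: the empty sentence, conjunction, the three kinds of target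
axioms, and constraint axioms `∀x. Σ(x) ↔ ψ(x)`. -/
inductive Sentence
  | top
  | and (φ₁ φ₂ : Sentence)
  | targetNode (s : SName) (c : Node)
  | targetClass (s : SName) (c : Node)
  | targetSubj (s : SName) (p : Node)
  | targetObj (s : SName) (p : Node)
  | axm (s : SName) (ψ : Constraint)

/-- A first-order relational structure: binary (graph) relations, represented
through the triple relation, plus monadic shape relations. -/
structure Interp where
  triple : Node → Node → Node → Prop
  shape : SName → Node → Prop

/-- The (two-valued) first-order interpretation of a constraint formula
`ψ(x)` in a structure. -/
def ceval (I : Interp) : Constraint → Node → Prop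
  | .top, _ => True
  | .ref s, n => I.shape s n
  | .eqc c, n => n = c
  | .hasTriple p o, n => I.triple n p o
  | .exPath p d, n => ∃ m, I.triple n p m ∧ ceval I d m
  | .not d, n => ¬ ceval I d n
  | .and d₁ d₂, n => ceval I d₁ n ∧ ceval I d₂ n

/-- Satisfaction of an SCL sentence by a structure. -/
def Interp.sat (I : Interp) : Sentence → Prop
  | .top => True
  | .and φ₁ φ₂ => I.sat φ₁ ∧ I.sat φ₂
  | .targetNode s c => I.shape s c
  | .targetClass s c => ∀ x, I.triple x isaPred c → I.shape s x
  | .targetSubj s p => ∀ x y, I.triple x p y → I.shape s x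
  | .targetObj s p => ∀ x y, I.triple y p x → I.shape s x
  | .axm s ψ => ∀ x, I.shape s x ↔ ceval I ψ x

/-- Translation of a target declaration of a shape into an SCL target
axiom. -/
def tauTarget (s : SName) : TargetDecl → Sentence
  | .node c => .targetNode s c
  | .cls c => .targetClass s c
  | .subjectsOf p => .targetSubj s p
  | .objectsOf p => .targetObj s p

/-- Translation of a single SHACL shape into SCL: the conjunction of its
target axioms with its constraint axiom. -/
def tauShape (sh : Shape) : Sentence :=
  .and (sh.target.foldr (fun td acc => .and (tauTarget sh.name td) acc) .top)
       (.axm sh.name sh.constraint)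

/-- The translation `τ` from SHACL documents to SCL sentences. -/
def tau (M : Document) : Sentence :=
  M.foldr (fun sh acc => .and (tauShape sh) acc) .top

/-- The structure induced by a graph and a (total) assignment. -/
def inducedInterp (G : Graph) (σ : Assignment) : Interp where
  triple a b c := (a, b, c) ∈ G
  shape s n := σ n s = some true

/-- The graph induced by a structure. -/
def inducedGraph (I : Interp) : Graph := {t | I.triple t.1 t.2.1 t.2.2}

open Classical in
/-- The (total) assignment induced by a structure. -/
noncomputable def inducedAssign (I : Interp) : Assignment := fun n s =>
  if I.shape s n then some true else some false

/-- The constraint axioms of an SCL sentence (pairs of a shape relation and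
its defining formula). -/
def Sentence.axms : Sentence → List (SName × Constraint)
  | .and φ₁ φ₂ => φ₁.axms ++ φ₂.axms
  | .axm s ψ => [(s, ψ)]
  | _ => []

/-- The target declarations recorded in an SCL sentence, together with the
shape relation they target. -/
def Sentence.tdecls : Sentence → List (SName × TargetDecl)
  | .and φ₁ φ₂ => φ₁.tdecls ++ φ₂.tdecls
  | .targetNode s c => [(s, .node c)]
  | .targetClass s c => [(s, .cls c)]
  | .targetSubj s p => [(s, .subjectsOf p)]
  | .targetObj s p => [(s, .objectsOf p)]
  | _ => []

/-- The shape names referenced by a constraint. -/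
def Constraint.refList : Constraint → List SName
  | .ref s => [s]
  | .not d => d.refList
  | .and d₁ d₂ => d₁.refList ++ d₂.refList
  | .exPath _ d => d.refList
  | _ => []

/-- The shape relations occurring in an SCL sentence. -/
def Sentence.snames : Sentence → List SName
  | .top => []
  | .and φ₁ φ₂ => φ₁.snames ++ φ₂.snames
  | .targetNode s _ => [s]
  | .targetClass s _ => [s]
  | .targetSubj s _ => [s]
  | .targetObj s _ => [s]
  | .axm s ψ => s :: ψ.refList

/-- An SCL sentence is well-formed if every shape relation occurring in it is
defined by exactly one constraint axiom. -/
def WellFormed (φ : Sentence) : Prop :=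
  ∀ s ∈ φ.snames, (φ.axms.filter (fun p => p.1 == s)).length = 1

/-- The inverse translation `τ⁻` from well-formed SCL sentences to SHACL
documents: for every constraint axiom `∀x. Σ(x) ↔ ψ(x)` it produces a shape
named `Σ`, with constraint `ψ` and with the targets collected from the target
axioms for `Σ`. -/
def tauInv (φ : Sentence) : Document :=
  φ.axms.map fun p =>
    { name := p.1,
      target := (φ.tdecls.filter (fun q => q.1 == p.1)).map Prod.snd,
      constraint := p.2 }

/-- The set of shape names of a document. -/
def namesOf (M : Document) : Set SName := {s | ∃ sh ∈ M, sh.name = s}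

/-- MSCL: monadic second-order sentences built over SCL by Boolean
connectives and second-order quantification over shape relations. -/
inductive MSentence
  | base (φ : Sentence)
  | not (Φ : MSentence)
  | and (Φ₁ Φ₂ : MSentence)
  | ex (s : SName) (Φ : MSentence)
  | all (s : SName) (Φ : MSentence)

/-- Re-interpretation of one shape relation of a structure. -/
def Interp.update (I : Interp) (s : SName) (X : Node → Prop) : Interp where
  triple := I.triple
  shape s' n := if s' = s then X n else I.shape s' n

/-- Standard second-order satisfaction of MSCL sentences, where shape
relations are treated as monadic second-order variables. -/
def Interp.msat (I : Interp) : MSentence → Prop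
  | .base φ => I.sat φ
  | .not Φ => ¬ I.msat Φ
  | .and Φ₁ Φ₂ => I.msat Φ₁ ∧ I.msat Φ₂
  | .ex s Φ => ∃ X : Node → Prop, (I.update s X).msat Φ
  | .all s Φ => ∀ X : Node → Prop, (I.update s X).msat Φ


/-- `M̃`: the document `M` with all target definitions emptied. -/
def minusTargets (M : Document) : Document :=
  M.map fun sh => { name := sh.name, target := [], constraint := sh.constraint }

/-- `s₁` directly references `s₂` in `M`. -/
def refersTo (M : Document) (s₁ s₂ : SName) : Prop :=
  ∃ sh ∈ M, sh.name = s₁ ∧ s₂ ∈ sh.constraint.refList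

/-- A document is recursive if some shape transitively references itself. -/
def Recursive (M : Document) : Prop :=
  ∃ s, Relation.TransGen (refersTo M) s s

/-- Validity of a graph w.r.t. a non-recursive document (for non-recursive
documents all four extended semantics coincide): existence of a faithful
assignment. -/
def Valid (G : Graph) (M : Document) : Prop :=
  ∃ σ : Assignment, Faithful G σ M

/-- `∃⃗[φ]`: existential second-order quantification of all shape relations
occurring in the enclosed formula. -/
def eCl (l : List SName) (Φ : MSentence) : MSentence :=
  l.foldr MSentence.ex Φ

/-- The MSCL sentence `∃⃗[τ(M₁)] ∧ ∃⃗[τ(M̃₂) ∧ ¬τ(M₂)]`. -/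
def containmentSentence (M₁ M₂ : Document) : MSentence :=
  MSentence.and
    (eCl (tau M₁).snames (.base (tau M₁)))
    (eCl ((tau (minusTargets M₂)).snames ++ (tau M₂).snames)
      (MSentence.and (.base (tau (minusTargets M₂))) (.not (.base (tau M₂)))))

/-! ### Auxiliary lemmas -/

lemma ceval_congr {I I' : Interp} (ht : ∀ a b c, I.triple a b c ↔ I'.triple a b c)
    (ψ : Constraint) (hs : ∀ s ∈ ψ.refList, ∀ m, I.shape s m ↔ I'.shape s m)
    (n : Node) : ceval I ψ n ↔ ceval I' ψ n := by
  induction ψ generalizing n with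
  | top => simp [ceval]
  | ref s => simpa [ceval] using hs s (by simp [Constraint.refList]) n
  | eqc c => simp [ceval]
  | hasTriple p o => simpa [ceval] using ht n p o
  | exPath p d ih =>
      have ih' := fun m => ih (fun s h m => hs s (by simpa [Constraint.refList] using h) m) m
      simp only [ceval]
      exact exists_congr fun m => and_congr (ht n p m) (ih' m)
  | not d ih =>
      simp only [ceval]
      exact not_congr (ih (fun s h m => hs s (by simpa [Constraint.refList] using h) m) n)
  | and d₁ d₂ ih₁ ih₂ =>
      simp only [ceval]
      exact and_congr
        (ih₁ (fun s h m => hs s (by simp [Constraint.refList]; exact Or.inl h) m) n)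
        (ih₂ (fun s h m => hs s (by simp [Constraint.refList]; exact Or.inr h) m) n)

open Classical in
lemma eval_induced {I : Interp} {G : Graph}
    (hG : ∀ a b c, I.triple a b c ↔ (a, b, c) ∈ G)
    (ψ : Constraint) (n : Node) :
    eval G (inducedAssign I) ψ n = (if ceval I ψ n then K3.t else K3.f) := by
  induction ψ generalizing n with
  | top => simp [eval, ceval]
  | ref s => by_cases h : I.shape s n <;> simp [eval, ceval, inducedAssign, h]
  | eqc c => by_cases h : n = c <;> simp [eval, ceval, h]
  | hasTriple p o => by_cases h : (n, p, o) ∈ G <;> simp [eval, ceval, hG n p o, h]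
  | exPath p d ih =>
      have ht : ∀ m, (eval G (inducedAssign I) d m = K3.t) ↔ ceval I d m := by
        intro m; rw [ih]; by_cases h : ceval I d m <;> simp [h]
      have hf : ∀ m, (eval G (inducedAssign I) d m = K3.f) ↔ ¬ ceval I d m := by
        intro m; rw [ih]; by_cases h : ceval I d m <;> simp [h]
      simp only [eval, ceval, hG]
      have hex : (∃ m, (n, p, m) ∈ G ∧ eval G (inducedAssign I) d m = K3.t) ↔
          ∃ m, (n, p, m) ∈ G ∧ ceval I d m :=
        exists_congr fun m => and_congr_right fun _ => ht m
      by_cases h : ∃ m, (n, p, m) ∈ G ∧ ceval I d m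
      · rw [if_pos (hex.2 h), if_pos h]
      · rw [if_neg (fun hc => h (hex.1 hc)), if_neg h, if_pos]
        intro m hm
        rw [hf]; intro hc; exact h ⟨m, hm, hc⟩
  | not d ih =>
      simp only [eval, ceval]
      rw [ih n]
      by_cases h : ceval I d n <;> simp [h]
  | and d₁ d₂ ih₁ ih₂ =>
      simp only [eval, ceval]
      rw [ih₁ n, ih₂ n]
      by_cases h₁ : ceval I d₁ n <;> by_cases h₂ : ceval I d₂ n <;> simp [h₁, h₂]

lemma sat_foldr_targets (I : Interp) (s : SName) (l : List TargetDecl) :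
    I.sat (l.foldr (fun td acc => .and (tauTarget s td) acc) .top) ↔
      ∀ td ∈ l, I.sat (tauTarget s td) := by
  induction l with
  | nil => simp [Interp.sat]
  | cons td l ih => simp [Interp.sat, ih]

lemma sat_tauShape (I : Interp) (sh : Shape) :
    I.sat (tauShape sh) ↔
      (∀ td ∈ sh.target, I.sat (tauTarget sh.name td)) ∧
      (∀ x, I.shape sh.name x ↔ ceval I sh.constraint x) := by
  simp [tauShape, Interp.sat, sat_foldr_targets]

lemma sat_tau (I : Interp) (M : Document) :
    I.sat (tau M) ↔ ∀ sh ∈ M, I.sat (tauShape sh) := by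
  induction M with
  | nil => simp [tau, Interp.sat]
  | cons sh M ih =>
      show I.sat (tauShape sh) ∧ I.sat (tau M) ↔ _
      rw [ih, List.forall_mem_cons]

lemma sat_tauTarget_iff {I : Interp} {G : Graph}
    (hG : ∀ a b c, I.triple a b c ↔ (a, b, c) ∈ G) (s : SName) (td : TargetDecl) :
    I.sat (tauTarget s td) ↔ ∀ n ∈ td.sem G, I.shape s n := by
  cases td with
  | node c => simp [tauTarget, Interp.sat, TargetDecl.sem]
  | cls c =>
      simp only [tauTarget, Interp.sat, TargetDecl.sem, Set.mem_setOf_eq]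
      exact forall_congr' fun x => imp_congr (hG x isaPred c) Iff.rfl
  | subjectsOf p =>
      simp only [tauTarget, Interp.sat, TargetDecl.sem, Set.mem_setOf_eq]
      constructor
      · rintro h n ⟨o, ho⟩; exact h n o ((hG n p o).2 ho)
      · intro h x y hxy; exact h x ⟨y, (hG x p y).1 hxy⟩
  | objectsOf p =>
      simp only [tauTarget, Interp.sat, TargetDecl.sem, Set.mem_setOf_eq]
      constructor
      · rintro h n ⟨s', hs'⟩; exact h n s' ((hG s' p n).2 hs')
      · intro h x y hxy; exact h x ⟨y, (hG y p x).1 hxy⟩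

lemma faithful_of_sat {I : Interp} {G : Graph}
    (hG : ∀ a b c, I.triple a b c ↔ (a, b, c) ∈ G) {M : Document}
    (h : I.sat (tau M)) : Faithful G (inducedAssign I) M := by
  rw [sat_tau] at h
  have hshape : ∀ s n, inducedAssign I n s = some true ↔ I.shape s n := by
    intro s n; by_cases hc : I.shape s n <;> simp [inducedAssign, hc]
  have hshapef : ∀ s n, inducedAssign I n s = some false ↔ ¬ I.shape s n := by
    intro s n; by_cases hc : I.shape s n <;> simp [inducedAssign, hc]
  constructor
  · intro sh hsh n
    have hax := ((sat_tauShape I sh).1 (h sh hsh)).2 n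
    have he := eval_induced hG sh.constraint n
    constructor
    · rw [hshape, hax, he]
      by_cases hc : ceval I sh.constraint n <;> simp [hc]
    · rw [hshapef, hax, he]
      by_cases hc : ceval I sh.constraint n <;> simp [hc]
  · intro sh hsh td htd n hn
    rw [hshape]
    exact ((sat_tauTarget_iff hG sh.name td).1 (((sat_tauShape I sh).1 (h sh hsh)).1 td htd)) n hn

lemma reach_finite (M : Document) (s : SName) :
    {t | Relation.TransGen (refersTo M) s t}.Finite := by
  apply Set.Finite.subset (List.finite_toSet (M.flatMap fun sh => sh.constraint.refList))
  intro t ht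
  simp only [Set.mem_setOf_eq] at ht
  induction ht with
  | single h =>
      obtain ⟨sh, hsh, _, hr⟩ := h
      simp only [List.coe_toFinset, Set.mem_setOf_eq, List.mem_flatMap]
      exact ⟨sh, hsh, hr⟩
  | tail _ h _ =>
      obtain ⟨sh, hsh, _, hr⟩ := h
      simp only [List.coe_toFinset, Set.mem_setOf_eq, List.mem_flatMap]
      exact ⟨sh, hsh, hr⟩

lemma wf_rref {M : Document} (hnr : ¬ Recursive M) :
    WellFounded (fun a b : SName => refersTo M b a) := by
  have h : ∀ a b : SName, refersTo M b a →
      {t | Relation.TransGen (refersTo M) a t}.ncard <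
        {t | Relation.TransGen (refersTo M) b t}.ncard := by
    intro a b hr
    apply Set.ncard_lt_ncard _ (reach_finite M b)
    rw [Set.ssubset_def]
    constructor
    · intro t ht; exact Relation.TransGen.head hr ht
    · intro hsub
      exact hnr ⟨a, hsub (Relation.TransGen.single hr)⟩
  exact Subrelation.wf (fun {a b} hab => h a b hab)
    (measure fun s => {t | Relation.TransGen (refersTo M) s t}.ncard).wf

open Classical in
noncomputable def canonX (M : Document) (G : Graph)
    (hwf : WellFounded (fun a b : SName => refersTo M b a)) : SName → Node → Prop :=
  hwf.fix (fun s rec =>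
    if h : ∃ sh ∈ M, sh.name = s then
      fun n => ceval
        { triple := fun a b c => (a, b, c) ∈ G,
          shape := fun s' n' => ∃ _ : refersTo M s s', rec s' ‹_› n' }
        (Classical.choose h).constraint n
    else fun _ => False)

lemma canonX_spec {M : Document} {G : Graph}
    (hwf : WellFounded (fun a b : SName => refersTo M b a))
    (hname : ∀ sh₁ ∈ M, ∀ sh₂ ∈ M, Shape.name sh₁ = Shape.name sh₂ → sh₁ = sh₂) :
    ∀ sh ∈ M, ∀ n,
      canonX M G hwf sh.name n ↔
        ceval { triple := fun a b c => (a, b, c) ∈ G, shape := canonX M G hwf }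
          sh.constraint n := by
  intro sh hsh n
  have h : ∃ sh' ∈ M, sh'.name = sh.name := ⟨sh, hsh, rfl⟩
  conv_lhs => rw [canonX, WellFounded.fix_eq, dif_pos h]
  have hc : (Classical.choose h).constraint = sh.constraint := by
    have hspec := Classical.choose_spec h
    exact congrArg Shape.constraint (hname _ hspec.1 sh hsh hspec.2)
  rw [hc]
  refine ceval_congr ?_ sh.constraint ?_ n
  · exact fun _ _ _ => Iff.rfl
  · intro s' hs' m
    constructor
    · rintro ⟨_, hh⟩; exact hh
    · intro hh; exact ⟨⟨sh, hsh, rfl, hs'⟩, hh⟩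

lemma solution_unique {M : Document} {I I' : Interp}
    (hwf : WellFounded (fun a b : SName => refersTo M b a))
    (hclosed : ∀ sh ∈ M, ∀ s ∈ sh.constraint.refList, s ∈ namesOf M)
    (ht : ∀ a b c, I.triple a b c ↔ I'.triple a b c)
    (hI : ∀ sh ∈ M, ∀ x, I.shape sh.name x ↔ ceval I sh.constraint x)
    (hI' : ∀ sh ∈ M, ∀ x, I'.shape sh.name x ↔ ceval I' sh.constraint x) :
    ∀ s, s ∈ namesOf M → ∀ m, (I.shape s m ↔ I'.shape s m) := by
  intro s
  refine hwf.induction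
    (C := fun s => s ∈ namesOf M → ∀ m, (I.shape s m ↔ I'.shape s m)) s ?_
  rintro x ih ⟨sh, hsh, rfl⟩ m
  rw [hI sh hsh m, hI' sh hsh m]
  exact ceval_congr ht sh.constraint
    (fun s' hs' m' => ih s' ⟨sh, hsh, rfl, hs'⟩ (hclosed sh hsh s' hs') m') m

lemma eval_imp_ceval {G : Graph} {σ : Assignment} {I : Interp}
    (hG : ∀ a b c, I.triple a b c ↔ (a, b, c) ∈ G) (ψ : Constraint)
    (h : ∀ s ∈ ψ.refList, ∀ m,
      (σ m s = some true → I.shape s m) ∧ (σ m s = some false → ¬ I.shape s m))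
    (n : Node) :
    (eval G σ ψ n = K3.t → ceval I ψ n) ∧ (eval G σ ψ n = K3.f → ¬ ceval I ψ n) := by
  induction ψ generalizing n with
  | top => simp [eval, ceval]
  | ref s =>
      have hh := h s (by simp [Constraint.refList]) n
      rcases hσ : σ n s with _ | b
      · simp [eval, ceval, hσ]
      · cases b
        · simp only [eval, ceval, hσ]
          refine ⟨fun hc => (by cases hc), fun _ => hh.2 hσ⟩
        · simp only [eval, ceval, hσ]
          refine ⟨fun _ => hh.1 hσ, fun hc => (by cases hc)⟩
  | eqc c => by_cases hc : n = c <;> simp [eval, ceval, hc]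
  | hasTriple p o => by_cases hc : (n, p, o) ∈ G <;> simp [eval, ceval, hG n p o, hc]
  | exPath p d ih =>
      have ih' := fun m => ih (fun s hs => h s (by simpa [Constraint.refList] using hs)) m
      simp only [eval, ceval]
      split_ifs with h1 h2
      · obtain ⟨m, hm, he⟩ := h1
        refine ⟨fun _ => ⟨m, (hG n p m).2 hm, (ih' m).1 he⟩, ?_⟩
        intro hc
        cases hc
      · refine ⟨?_, fun _ => ?_⟩
        · intro hc
          cases hc
        · rintro ⟨m, hm, hc⟩
          exact (ih' m).2 (h2 m ((hG n p m).1 hm)) hc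
      · refine ⟨?_, ?_⟩ <;> intro hc <;> cases hc
  | not d ih =>
      have ihd := ih (fun s hs => h s (by simpa [Constraint.refList] using hs)) n
      simp only [eval, ceval]
      cases he : eval G σ d n
      · exact ⟨fun hc => (by cases hc), fun _ hc => hc (ihd.1 he)⟩
      · exact ⟨fun _ => ihd.2 he, fun hc => (by cases hc)⟩
      · exact ⟨fun hc => (by cases hc), fun hc => (by cases hc)⟩
  | and d₁ d₂ ih₁ ih₂ =>
      have ihd₁ := ih₁ (fun s hs => h s (by
        simp only [Constraint.refList, List.mem_append]; exact Or.inl hs)) n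
      have ihd₂ := ih₂ (fun s hs => h s (by
        simp only [Constraint.refList, List.mem_append]; exact Or.inr hs)) n
      simp only [eval, ceval]
      cases he₁ : eval G σ d₁ n <;> cases he₂ : eval G σ d₂ n
      · exact ⟨fun _ => ⟨ihd₁.1 he₁, ihd₂.1 he₂⟩, fun hc => (by cases hc)⟩
      · exact ⟨fun hc => (by cases hc), fun _ hc => ihd₂.2 he₂ hc.2⟩
      · exact ⟨fun hc => (by cases hc), fun hc => (by cases hc)⟩
      · exact ⟨fun hc => (by cases hc), fun _ hc => ihd₁.2 he₁ hc.1⟩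
      · exact ⟨fun hc => (by cases hc), fun _ hc => ihd₁.2 he₁ hc.1⟩
      · exact ⟨fun hc => (by cases hc), fun _ hc => ihd₁.2 he₁ hc.1⟩
      · exact ⟨fun hc => (by cases hc), fun hc => (by cases hc)⟩
      · exact ⟨fun hc => (by cases hc), fun _ hc => ihd₂.2 he₂ hc.2⟩
      · exact ⟨fun hc => (by cases hc), fun hc => (by cases hc)⟩

lemma faithful_imp_canon {M : Document} {G : Graph} {σ : Assignment} {I : Interp}
    (hwf : WellFounded (fun a b : SName => refersTo M b a))
    (hclosed : ∀ sh ∈ M, ∀ s ∈ sh.constraint.refList, s ∈ namesOf M)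
    (hG : ∀ a b c, I.triple a b c ↔ (a, b, c) ∈ G)
    (hfa : ∀ sh ∈ M, ∀ n, (σ n sh.name = some true ↔ eval G σ sh.constraint n = .t) ∧
        (σ n sh.name = some false ↔ eval G σ sh.constraint n = .f))
    (hI : ∀ sh ∈ M, ∀ x, I.shape sh.name x ↔ ceval I sh.constraint x) :
    ∀ s, s ∈ namesOf M → ∀ m,
      (σ m s = some true → I.shape s m) ∧ (σ m s = some false → ¬ I.shape s m) := by
  intro s
  refine hwf.induction (C := fun s => s ∈ namesOf M → ∀ m,
    (σ m s = some true → I.shape s m) ∧ (σ m s = some false → ¬ I.shape s m)) s ?_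
  rintro x ih ⟨sh, hsh, rfl⟩ m
  have key := eval_imp_ceval hG sh.constraint
    (fun s' hs' m' => ih s' ⟨sh, hsh, rfl, hs'⟩ (hclosed sh hsh s' hs') m') m
  constructor
  · intro hσ
    exact (hI sh hsh m).2 (key.1 ((hfa sh hsh m).1.1 hσ))
  · intro hσ hsha
    exact key.2 ((hfa sh hsh m).2.1 hσ) ((hI sh hsh m).1 hsha)

lemma faithful_to_sat {M : Document}
    (hwf : WellFounded (fun a b : SName => refersTo M b a))
    (hname : ∀ sh₁ ∈ M, ∀ sh₂ ∈ M, Shape.name sh₁ = Shape.name sh₂ → sh₁ = sh₂)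
    (hclosed : ∀ sh ∈ M, ∀ s ∈ sh.constraint.refList, s ∈ namesOf M)
    {G : Graph} {σ : Assignment} (h : Faithful G σ M) :
    ∃ I : Interp, (∀ a b c, I.triple a b c ↔ (a, b, c) ∈ G) ∧ I.sat (tau M) := by
  refine ⟨⟨fun a b c => (a, b, c) ∈ G, canonX M G hwf⟩, fun _ _ _ => Iff.rfl, ?_⟩
  have hax := canonX_spec (G := G) hwf hname
  have hcons := faithful_imp_canon hwf hclosed
    (I := ⟨fun a b c => (a, b, c) ∈ G, canonX M G hwf⟩)
    (fun _ _ _ => Iff.rfl) h.1 hax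
  rw [sat_tau]
  intro sh hsh
  rw [sat_tauShape]
  refine ⟨fun td htd => ?_, hax sh hsh⟩
  rw [sat_tauTarget_iff (fun _ _ _ => Iff.rfl)]
  intro n hn
  exact (hcons sh.name ⟨sh, hsh, rfl⟩ n).1 (h.2 sh hsh td htd n hn)

lemma sat_tau_minus (I : Interp) (M : Document) :
    I.sat (tau (minusTargets M)) ↔
      ∀ sh ∈ M, ∀ x, I.shape sh.name x ↔ ceval I sh.constraint x := by
  rw [sat_tau]
  constructor
  · intro h sh hsh x
    have := (sat_tauShape I _).1
      (h _ (List.mem_map_of_mem (f := fun sh : Shape =>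
        ({ name := sh.name, target := [], constraint := sh.constraint } : Shape)) hsh))
    exact this.2 x
  · intro h sh' hsh'
    rw [sat_tauShape]
    obtain ⟨sh, hsh, rfl⟩ := List.mem_map.1 hsh'
    exact ⟨by simp, h sh hsh⟩

lemma snames_targets {s name : SName} {l : List TargetDecl}
    (h : s ∈ (l.foldr (fun td acc => Sentence.and (tauTarget name td) acc) .top).snames) :
    s = name := by
  induction l with
  | nil => simp [Sentence.snames] at h
  | cons td l ih =>
      rcases List.mem_append.1 h with h | h
      · cases td <;> simpa [tauTarget, Sentence.snames] using h
      · exact ih h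

lemma mem_snames_tauShape {s : SName} {sh : Shape} (h : s ∈ (tauShape sh).snames) :
    s = sh.name ∨ s ∈ sh.constraint.refList := by
  rcases List.mem_append.1 h with h | h
  · exact Or.inl (snames_targets h)
  · rcases List.mem_cons.1 h with h | h
    · exact Or.inl h
    · exact Or.inr h

lemma mem_snames_tau {M : Document} {s : SName} (h : s ∈ (tau M).snames) :
    ∃ sh ∈ M, s = sh.name ∨ s ∈ sh.constraint.refList := by
  induction M with
  | nil => simp [tau, Sentence.snames] at h
  | cons sh M ih =>
      rcases List.mem_append.1 h with h | h
      · exact ⟨sh, by simp, mem_snames_tauShape h⟩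
      · obtain ⟨sh', h1, h2⟩ := ih h
        exact ⟨sh', by simp [h1], h2⟩

lemma snames_sub_names {M : Document}
    (hclosed : ∀ sh ∈ M, ∀ t ∈ sh.constraint.refList, t ∈ namesOf M)
    {s : SName} (h : s ∈ (tau M).snames) : s ∈ namesOf M := by
  obtain ⟨sh, hsh, h | h⟩ := mem_snames_tau h
  · exact ⟨sh, hsh, h.symm⟩
  · exact hclosed sh hsh s h

lemma sat_congr {I I' : Interp} (ht : ∀ a b c, I.triple a b c ↔ I'.triple a b c)
    (φ : Sentence) (hs : ∀ s ∈ φ.snames, ∀ m, I.shape s m ↔ I'.shape s m) :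
    I.sat φ ↔ I'.sat φ := by
  induction φ with
  | top => simp [Interp.sat]
  | and φ₁ φ₂ ih₁ ih₂ =>
      show I.sat φ₁ ∧ I.sat φ₂ ↔ I'.sat φ₁ ∧ I'.sat φ₂
      exact and_congr
        (ih₁ fun s h m => hs s (List.mem_append.2 (Or.inl h)) m)
        (ih₂ fun s h m => hs s (List.mem_append.2 (Or.inr h)) m)
  | targetNode s c =>
      exact hs s (by simp [Sentence.snames]) c
  | targetClass s c =>
      exact forall_congr' fun x =>
        imp_congr (ht x isaPred c) (hs s (by simp [Sentence.snames]) x)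
  | targetSubj s p =>
      exact forall_congr' fun x => forall_congr' fun y =>
        imp_congr (ht x p y) (hs s (by simp [Sentence.snames]) x)
  | targetObj s p =>
      exact forall_congr' fun x => forall_congr' fun y =>
        imp_congr (ht y p x) (hs s (by simp [Sentence.snames]) x)
  | axm s ψ =>
      exact forall_congr' fun x => iff_congr
        (hs s (by simp [Sentence.snames]) x)
        (ceval_congr ht ψ
          (fun s' h m => hs s' (by simp [Sentence.snames, h]) m) x)

lemma msat_eCl (I : Interp) (l : List SName) (Φ : MSentence) :
    I.msat (eCl l Φ) ↔ ∃ J : Interp, J.triple = I.triple ∧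
      (∀ s, s ∉ l → J.shape s = I.shape s) ∧ J.msat Φ := by
  induction l generalizing I with
  | nil =>
      constructor
      · intro h; exact ⟨I, rfl, fun _ _ => rfl, h⟩
      · rintro ⟨J, h1, h2, h3⟩
        have hJ : J = I := by
          obtain ⟨Jt, Js⟩ := J
          obtain ⟨It, Is⟩ := I
          simp only at h1
          subst h1
          have : Js = Is := funext fun s => h2 s List.not_mem_nil
          rw [this]
        rw [← hJ]; exact h3
  | cons s l ih =>
      show (∃ X : Node → Prop, (I.update s X).msat (eCl l Φ)) ↔ _
      constructor
      · rintro ⟨X, hX⟩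
        obtain ⟨J, h1, h2, h3⟩ := (ih _).1 hX
        refine ⟨J, h1, fun s' hs' => ?_, h3⟩
        have hne : s' ≠ s := fun he => hs' (he ▸ (List.mem_cons_self : s' ∈ s' :: l))
        rw [h2 s' (fun hm => hs' (List.mem_cons_of_mem _ hm))]
        funext n
        simp [Interp.update, hne]
      · rintro ⟨J, h1, h2, h3⟩
        refine ⟨J.shape s, (ih _).2 ⟨J, h1, fun s' hs' => ?_, h3⟩⟩
        by_cases he : s' = s
        · subst he; funext n; simp [Interp.update]
        · funext n
          simp only [Interp.update, if_neg he]
          rw [h2 s' (by simp [he, hs'])]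

/-- Lemma: containment of non-recursive documents: for any
pair of non-recursive SHACL documents `M₁`, `M₂` (with unique shape names and
shape references staying inside the document), `M₁ ⊆ M₂` — every graph valid
w.r.t. `M₁` is valid w.r.t. `M₂` — iff the MSCL sentence
`∃⃗[τ(M₁)] ∧ ∃⃗[τ(M̃₂) ∧ ¬τ(M₂)]` is unsatisfiable. -/
theorem nonrecursive_containment_iff_unsat
    (M₁ M₂ : Document)
    (hnr₁ : ¬ Recursive M₁) (hnr₂ : ¬ Recursive M₂)
    (hname₁ : ∀ sh₁ ∈ M₁, ∀ sh₂ ∈ M₁, Shape.name sh₁ = Shape.name sh₂ → sh₁ = sh₂)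
    (hname₂ : ∀ sh₁ ∈ M₂, ∀ sh₂ ∈ M₂, Shape.name sh₁ = Shape.name sh₂ → sh₁ = sh₂)
    (hclosed₁ : ∀ sh ∈ M₁, ∀ s ∈ sh.constraint.refList, s ∈ namesOf M₁)
    (hclosed₂ : ∀ sh ∈ M₂, ∀ s ∈ sh.constraint.refList, s ∈ namesOf M₂) :
    (∀ G : Graph, Valid G M₁ → Valid G M₂) ↔
      ¬ ∃ I : Interp, I.msat (containmentSentence M₁ M₂) := by
  have hwf₁ := wf_rref hnr₁
  have hwf₂ := wf_rref hnr₂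
  constructor
  · rintro hcont ⟨I, hI⟩
    obtain ⟨h1, h2⟩ : I.msat (eCl (tau M₁).snames (.base (tau M₁))) ∧
        I.msat (eCl ((tau (minusTargets M₂)).snames ++ (tau M₂).snames)
          (MSentence.and (.base (tau (minusTargets M₂))) (.not (.base (tau M₂))))) := hI
    set G : Graph := {t | I.triple t.1 t.2.1 t.2.2} with hGdef
    obtain ⟨J₁, hJ₁t, -, hJ₁⟩ := (msat_eCl I _ _).1 h1
    obtain ⟨J₂, hJ₂t, -, hJ₂⟩ := (msat_eCl I _ _).1 h2
    obtain ⟨hJ₂m, hJ₂n⟩ : J₂.sat (tau (minusTargets M₂)) ∧ ¬ J₂.sat (tau M₂) := hJ₂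
    have hJ₁G : ∀ a b c, J₁.triple a b c ↔ (a, b, c) ∈ G := by
      intro a b c; rw [hJ₁t]; exact Iff.rfl
    have hJ₂G : ∀ a b c, J₂.triple a b c ↔ (a, b, c) ∈ G := by
      intro a b c; rw [hJ₂t]; exact Iff.rfl
    have hv₁ : Valid G M₁ := ⟨inducedAssign J₁, faithful_of_sat hJ₁G hJ₁⟩
    obtain ⟨σ₂, hσ₂⟩ := hcont G hv₁
    set IX : Interp := ⟨fun a b c => (a, b, c) ∈ G, canonX M₂ G hwf₂⟩ with hIXdef
    have hIXG : ∀ a b c, IX.triple a b c ↔ (a, b, c) ∈ G := fun _ _ _ => Iff.rfl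
    have hIXax : ∀ sh ∈ M₂, ∀ x, IX.shape sh.name x ↔ ceval IX sh.constraint x :=
      canonX_spec hwf₂ hname₂
    have hcons := faithful_imp_canon hwf₂ hclosed₂ hIXG hσ₂.1 hIXax
    have hIXsat : IX.sat (tau M₂) := by
      rw [sat_tau]
      intro sh hsh
      rw [sat_tauShape]
      refine ⟨fun td htd => ?_, hIXax sh hsh⟩
      rw [sat_tauTarget_iff hIXG]
      intro n hn
      exact (hcons sh.name ⟨sh, hsh, rfl⟩ n).1 (hσ₂.2 sh hsh td htd n hn)
    have hJ₂ax : ∀ sh ∈ M₂, ∀ x, J₂.shape sh.name x ↔ ceval J₂ sh.constraint x :=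
      (sat_tau_minus J₂ M₂).1 hJ₂m
    have ht : ∀ a b c, J₂.triple a b c ↔ IX.triple a b c := fun a b c =>
      (hJ₂G a b c).trans (hIXG a b c).symm
    have huniq := solution_unique hwf₂ hclosed₂ ht hJ₂ax hIXax
    exact hJ₂n ((sat_congr ht (tau M₂)
      (fun s hs m => huniq s (snames_sub_names hclosed₂ hs) m)).2 hIXsat)
  · intro hunsat G hv₁
    by_contra hnv₂
    obtain ⟨σ₁, hσ₁⟩ := hv₁
    obtain ⟨I₁, hI₁G, hI₁sat⟩ := faithful_to_sat hwf₁ hname₁ hclosed₁ hσ₁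
    set IX : Interp := ⟨fun a b c => (a, b, c) ∈ G, canonX M₂ G hwf₂⟩ with hIXdef
    have hIXG : ∀ a b c, IX.triple a b c ↔ (a, b, c) ∈ G := fun _ _ _ => Iff.rfl
    have hIXax : ∀ sh ∈ M₂, ∀ x, IX.shape sh.name x ↔ ceval IX sh.constraint x :=
      canonX_spec hwf₂ hname₂
    have hIXminus : IX.sat (tau (minusTargets M₂)) := (sat_tau_minus _ _).2 hIXax
    have hIXnot : ¬ IX.sat (tau M₂) := fun hsat =>
      hnv₂ ⟨inducedAssign IX, faithful_of_sat hIXG hsat⟩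
    set I₀ : Interp := ⟨fun a b c => (a, b, c) ∈ G, fun _ _ => False⟩ with hI₀def
    apply hunsat
    refine ⟨I₀, ?_, ?_⟩
    · -- first conjunct
      rw [msat_eCl]
      classical
      refine ⟨⟨I₀.triple, fun s => if s ∈ (tau M₁).snames then I₁.shape s else I₀.shape s⟩,
        rfl, fun s hs => by simp [hs], ?_⟩
      show Interp.sat _ (tau M₁)
      refine (sat_congr (I := I₁) ?_ (tau M₁) ?_).1 hI₁sat
      · exact fun a b c => (hI₁G a b c).trans Iff.rfl
      · intro s hs m
        simp [hs]
    · -- second conjunct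
      rw [msat_eCl]
      classical
      set l₂ : List SName := (tau (minusTargets M₂)).snames ++ (tau M₂).snames with hl₂
      refine ⟨⟨I₀.triple, fun s => if s ∈ l₂ then IX.shape s else I₀.shape s⟩,
        rfl, fun s hs => by simp [hs], ?_, ?_⟩
      · show Interp.sat _ (tau (minusTargets M₂))
        refine (sat_congr (I := IX) ?_ _ ?_).1 hIXminus
        · exact fun a b c => Iff.rfl
        · intro s hs m
          simp [hl₂, List.mem_append, hs]
      · show ¬ Interp.sat _ (tau M₂)
        intro hsat
        apply hIXnot
        refine (sat_congr (I := IX) ?_ (tau M₂) ?_).2 hsat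
        · exact fun a b c => Iff.rfl
        · intro s hs m
          simp [hl₂, List.mem_append, hs]

end SHACL
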